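/- Let f : X → T be a flat morphism of schemes, with X and T locally noetherian. Assume that T is reduced and that for every point t of T the fiber X_t = X ×_T Spec κ(t) is reduced. Then X is reduced. -/

import Mathlib

open AlgebraicGeometry CategoryTheory Limits TensorProduct IsLocalRing

universe u

/-- A localization of a reduced ring is reduced. -/
lemma isReduced_of_isLocalization'' (A : Type*) [CommRing A] (M : Submonoid A)
    (S : Type*) [CommRing S] [Algebra A S] [IsLocalization M S] [IsReduced A] :
    IsReduced S := by
  constructor
  intro x hx
  obtain ⟨⟨a, s⟩, has⟩ := IsLocalization.surj M x
  obtain ⟨n, hn⟩ := hx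
  have ha : IsNilpotent (algebraMap A S a) := by
    rw [← has]
    exact (Commute.all x _).isNilpotent_mul_right ⟨n, hn⟩
  obtain ⟨m, hm⟩ := ha
  rw [← map_pow] at hm
  obtain ⟨c, hc⟩ := (IsLocalization.map_eq_zero_iff M S _).mp hm
  have h0 : (↑c * a) ^ (m + 1) = 0 := by
    have : (↑c * a) ^ (m + 1) = (↑c * a ^ m) * (↑c ^ m * a) := by ring
    rw [this, hc, zero_mul]
  have hca : (c : A) * a = 0 := IsNilpotent.eq_zero ⟨m + 1, h0⟩
  have : algebraMap A S a = 0 := (IsLocalization.map_eq_zero_iff M S a).mpr ⟨c, hca⟩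
  have hx0 : x * algebraMap A S s = 0 := by rw [has]; exact this
  have hs : IsUnit (algebraMap A S s) := IsLocalization.map_units S s
  exact hs.mul_left_eq_zero.mp (mul_comm x _ ▸ hx0)

lemma isReduced_of_flat_of_fields' {A R S : Type*} [CommRing A] [CommRing R] [CommRing S]
    [Algebra A R] [Algebra A S] [IsNoetherianRing R] [IsReduced R]
    [Module.Flat A S]
    (φ : R →ₐ[A] S)
    (K : PrimeSpectrum R → Type*) [∀ p, CommRing (K p)] [∀ p, Algebra A (K p)]
    (ρ : ∀ p, R →ₐ[A] K p)
    (hker : ∀ p, RingHom.ker (ρ p) ≤ p.asIdeal)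
    (hred : ∀ p, IsReduced (S ⊗[A] K p)) :
    IsReduced S := by
  classical
  let ι := {p : PrimeSpectrum R // p.asIdeal ∈ minimalPrimes R}
  have : Finite ι := by
    have h1 : (minimalPrimes R).Finite := minimalPrimes.finite_of_isNoetherianRing R
    have := h1.to_subtype
    exact Finite.of_injective (fun p : ι => (⟨p.1.asIdeal, p.2⟩ : minimalPrimes R))
      (fun p q h => by
        ext1; ext1
        exact congrArg Subtype.val h)
  have : Fintype ι := Fintype.ofFinite ι
  let J : R →ₗ[A] (∀ p : ι, K p.1) := LinearMap.pi (fun p => (ρ p.1).toLinearMap)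
  have hJ : Function.Injective J := by
    rw [injective_iff_map_eq_zero]
    intro r hr
    have hmem : r ∈ sInf (minimalPrimes R) := by
      rw [Ideal.mem_sInf]
      intro q hq
      have hprime : q.IsPrime := hq.1.1
      exact hker ⟨q, hprime⟩ (by simpa [J] using congrFun hr ⟨⟨q, hprime⟩, hq⟩)
    rw [minimalPrimes, Ideal.sInf_minimalPrimes] at hmem
    have : IsNilpotent r := mem_nilradical.mp (by simpa [nilradical] using hmem)
    exact this.eq_zero
  let L := LinearMap.lTensor (R := A) S J
  have hL : Function.Injective L := Module.Flat.lTensor_preserves_injective_linearMap J hJ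
  let e := TensorProduct.piRight A S S (fun p : ι => K p.1)
  let μ : S ⊗[A] R →ₐ[A] S :=
    Algebra.TensorProduct.lift (AlgHom.id A S) φ (fun _ _ => Commute.all _ _)
  let Φ : S →+* ∀ p : ι, S ⊗[A] K p.1 :=
    Pi.ringHom (fun p => Algebra.TensorProduct.includeLeftRingHom)
  have hΦ : Function.Injective Φ := by
    rw [injective_iff_map_eq_zero]
    intro s hs
    have h1 : e (L (s ⊗ₜ[A] (1 : R))) = 0 := by
      have : e (L (s ⊗ₜ[A] (1 : R))) = fun p : ι => s ⊗ₜ[A] (1 : K p.1) := by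
        simp [e, L, J]
      rw [this]
      funext p
      exact congrFun hs p
    have h2 : (s ⊗ₜ[A] (1 : R) : S ⊗[A] R) = 0 := by
      apply hL
      apply e.injective
      rw [h1, LinearMap.map_zero, LinearEquiv.map_zero]
    have := congrArg μ h2
    simpa [μ] using this
  haveI : ∀ p : ι, IsReduced (S ⊗[A] K p.1) := fun p => hred p.1
  exact isReduced_of_injective Φ hΦ

attribute [local instance] Algebra.TensorProduct.rightAlgebra in
lemma isReduced_tensor_of_isLocalization' (A B S K : Type*) [CommRing A] [CommRing B]
    [CommRing S] [CommRing K]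
    [Algebra A B] [Algebra A K] [Algebra A S] [Algebra B S] [IsScalarTower A B S]
    (M : Submonoid B) [IsLocalization M S]
    [IsReduced (B ⊗[A] K)] : IsReduced (S ⊗[A] K) := by
  letI algCD : Algebra (B ⊗[A] K) (S ⊗[A] K) :=
    (Algebra.TensorProduct.map (IsScalarTower.toAlgHom A B S) (AlgHom.id A K)).toRingHom.toAlgebra
  haveI t2 : IsScalarTower B (B ⊗[A] K) (S ⊗[A] K) :=
    IsScalarTower.of_algebraMap_eq fun b => by
      simp [RingHom.algebraMap_toAlgebra, Algebra.TensorProduct.algebraMap_apply]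
  haveI t4 : IsScalarTower K (B ⊗[A] K) (S ⊗[A] K) :=
    IsScalarTower.of_algebraMap_eq fun k => by
      simp [RingHom.algebraMap_toAlgebra, Algebra.TensorProduct.algebraMap_apply]
  haveI t3 : IsScalarTower A (B ⊗[A] K) (S ⊗[A] K) :=
    IsScalarTower.of_algebraMap_eq fun a => by
      simp [RingHom.algebraMap_toAlgebra, Algebra.TensorProduct.algebraMap_apply,
        IsScalarTower.algebraMap_apply A B S]
  haveI hpush : Algebra.IsPushout B S (B ⊗[A] K) (S ⊗[A] K) := by
    rw [← Algebra.IsPushout.comp_iff (R := A) (S := B) (T := S) (R' := K)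
      (S' := B ⊗[A] K) (T' := S ⊗[A] K)]
    infer_instance
  haveI : IsLocalization (Algebra.algebraMapSubmonoid (B ⊗[A] K) M) (S ⊗[A] K) := by
    rw [← isLocalizedModule_iff_isLocalization]
    rw [isLocalizedModule_iff_isBaseChange M S]
    exact Algebra.IsPushout.out
  exact isReduced_of_isLocalization'' (B ⊗[A] K) (Algebra.algebraMapSubmonoid (B ⊗[A] K) M)
    (S ⊗[A] K)

lemma fromSpecStalk_base_specializes {T : Scheme.{u}} {t : T}
    (p : PrimeSpectrum (T.presheaf.stalk t)) : (T.fromSpecStalk t).base p ⤳ t := by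
  have : (T.fromSpecStalk t).base p ∈ Set.range (T.fromSpecStalk t).base := ⟨p, rfl⟩
  rwa [Scheme.range_fromSpecStalk] at this

lemma ker_stalkSpecializes_residue {T : Scheme.{u}} {t : T}
    (p : PrimeSpectrum (T.presheaf.stalk t)) :
    RingHom.ker (T.presheaf.stalkSpecializes (fromSpecStalk_base_specializes p) ≫
      T.residue ((T.fromSpecStalk t).base p)).hom = p.asIdeal := by
  set t' := (T.fromSpecStalk t).base p with ht'
  have h := fromSpecStalk_base_specializes p
  have key : (Spec.map (T.presheaf.stalkSpecializes h)).base (closedPoint (T.presheaf.stalk t'))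
      = p := by
    apply (T.fromSpecStalk t).isEmbedding.injective
    have := Scheme.SpecMap_stalkSpecializes_fromSpecStalk (X := T) h
    have h2 := congrArg (fun g : Spec (T.presheaf.stalk t') ⟶ T =>
      g.base (closedPoint (T.presheaf.stalk t'))) this
    simp only [Scheme.Hom.comp_apply] at h2
    exact (Scheme.Hom.comp_apply _ _ _).symm.trans (h2.trans Scheme.fromSpecStalk_closedPoint)
  have : p.asIdeal = Ideal.comap (T.presheaf.stalkSpecializes h).hom
      (maximalIdeal (T.presheaf.stalk t')) := (congrArg PrimeSpectrum.asIdeal key).symm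
  rw [this, ← ker_residue, RingHom.comap_ker]
  rfl

lemma isReduced_tensor_of_fiber_reduced' {X T : Scheme.{u}} (f : X ⟶ T) {U : T.Opens}
    (hU : IsAffineOpen U) {V : X.Opens} (hV : IsAffineOpen V) (hVU : V ≤ f ⁻¹ᵁ U)
    {t' : T} (ht'U : t' ∈ U)
    [IsReduced (pullback f (T.fromSpecResidueField t'))] :
    letI : Algebra ↥Γ(T, U) ↥Γ(X, V) := (f.appLE U V hVU).hom.toAlgebra
    letI : Algebra ↥Γ(T, U) ↥(T.residueField t') :=
      (T.presheaf.germ U t' ht'U ≫ T.residue t').hom.toAlgebra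
    IsReduced (↥Γ(X, V) ⊗[↥Γ(T, U)] ↥(T.residueField t')) := by
  letI : Algebra ↥Γ(T, U) ↥Γ(X, V) := (f.appLE U V hVU).hom.toAlgebra
  letI : Algebra ↥Γ(T, U) ↥(T.residueField t') :=
    (T.presheaf.germ U t' ht'U ≫ T.residue t').hom.toAlgebra
  have e₁ : Spec.map (CommRingCat.ofHom (algebraMap ↥Γ(T, U) ↥Γ(X, V))) ≫ hU.fromSpec =
      hV.fromSpec ≫ f := IsAffineOpen.SpecMap_appLE_fromSpec f hU hV hVU
  have e₂ : Spec.map (CommRingCat.ofHom (algebraMap ↥Γ(T, U) ↥(T.residueField t'))) ≫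
      hU.fromSpec = 𝟙 _ ≫ T.fromSpecResidueField t' := by
    rw [Category.id_comp]
    show Spec.map (T.presheaf.germ U t' ht'U ≫ T.residue t') ≫ hU.fromSpec = _
    rw [Spec.map_comp, Category.assoc]
    have : Spec.map (T.presheaf.germ U t' ht'U) ≫ hU.fromSpec = T.fromSpecStalk t' :=
      hU.fromSpecStalk_eq_fromSpecStalk ht'U
    rw [this]
    rfl
  let ε := pullback.map (Spec.map (CommRingCat.ofHom (algebraMap ↥Γ(T, U) ↥Γ(X, V))))
    (Spec.map (CommRingCat.ofHom (algebraMap ↥Γ(T, U) ↥(T.residueField t'))))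
    f (T.fromSpecResidueField t') hV.fromSpec (𝟙 _) hU.fromSpec e₁ e₂
  haveI : IsOpenImmersion ε := by
    apply Scheme.pullback_map_isOpenImmersion
  haveI h1 : IsReduced (pullback
      (Spec.map (CommRingCat.ofHom (algebraMap ↥Γ(T, U) ↥Γ(X, V))))
      (Spec.map (CommRingCat.ofHom (algebraMap ↥Γ(T, U) ↥(T.residueField t'))))) :=
    isReduced_of_isOpenImmersion ε
  haveI h2 : IsReduced (Spec (CommRingCat.of (↥Γ(X, V) ⊗[↥Γ(T, U)] ↥(T.residueField t')))) :=
    isReduced_of_isOpenImmersion (pullbackSpecIso ↥Γ(T, U) ↥Γ(X, V) ↥(T.residueField t')).inv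
  exact (affine_isReduced_iff _).mp h2

/-- Let `f : X ⟶ T` be a flat morphism of schemes (all stalk maps are flat ring maps),
with `X` and `T` locally noetherian. Assume `T` is reduced and every fiber
`X ×_T Spec κ(t)` is reduced. Then `X` is reduced. -/
theorem isReduced_of_flat_of_reduced_fibers
    {X T : Scheme.{u}} (f : X ⟶ T)
    [IsLocallyNoetherian X] [IsLocallyNoetherian T]
    (hflat : ∀ x : X, RingHom.Flat (f.stalkMap x).hom)
    [IsReduced T]
    (hfib : ∀ t : T, IsReduced (pullback f (T.fromSpecResidueField t))) :
    IsReduced X := by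
  apply (config := { allowSynthFailures := true }) isReduced_of_isReduced_stalk
  intro x
  obtain ⟨_, ⟨U, hU, rfl⟩, htU, -⟩ := T.isBasis_affineOpens.exists_subset_of_mem_open
    (Set.mem_univ (f.base x)) isOpen_univ
  obtain ⟨_, ⟨V, hV, rfl⟩, hxV, hVU⟩ := X.isBasis_affineOpens.exists_subset_of_mem_open
    htU (f ⁻¹ᵁ U).2
  letI : Algebra ↥Γ(T, U) ↥Γ(X, V) := (f.appLE U V hVU).hom.toAlgebra
  letI : Algebra ↥Γ(X, V) ↥(X.presheaf.stalk x) := (X.presheaf.germ V x hxV).hom.toAlgebra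
  letI : Algebra ↥Γ(T, U) ↥(T.presheaf.stalk (f.base x)) :=
    (T.presheaf.germ U (f.base x) htU).hom.toAlgebra
  letI : Algebra ↥(T.presheaf.stalk (f.base x)) ↥(X.presheaf.stalk x) :=
    (f.stalkMap x).hom.toAlgebra
  letI : Algebra ↥Γ(T, U) ↥(X.presheaf.stalk x) :=
    (T.presheaf.germ U (f.base x) htU ≫ f.stalkMap x).hom.toAlgebra
  haveI : IsScalarTower ↥Γ(T, U) ↥(T.presheaf.stalk (f.base x)) ↥(X.presheaf.stalk x) :=
    IsScalarTower.of_algebraMap_eq' rfl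
  haveI : IsScalarTower ↥Γ(T, U) ↥Γ(X, V) ↥(X.presheaf.stalk x) := by
    apply IsScalarTower.of_algebraMap_eq'
    show (T.presheaf.germ U (f.base x) htU ≫ f.stalkMap x).hom =
      (f.appLE U V hVU ≫ X.presheaf.germ V x hxV).hom
    rw [Scheme.Hom.germ_stalkMap f U x htU]
    simp only [Scheme.Hom.appLE, Category.assoc, TopCat.Presheaf.germ_res]
  -- noetherian, reduced, flat
  haveI : IsNoetherianRing ↥Γ(T, U) := IsLocallyNoetherian.component_noetherian ⟨U, hU⟩
  haveI hlocT : IsLocalization.AtPrime (T.presheaf.stalk (f.base x))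
      (hU.primeIdealOf ⟨f.base x, htU⟩).asIdeal := hU.isLocalization_stalk ⟨f.base x, htU⟩
  haveI hlocX : IsLocalization.AtPrime (X.presheaf.stalk x)
      (hV.primeIdealOf ⟨x, hxV⟩).asIdeal := hV.isLocalization_stalk ⟨x, hxV⟩
  haveI : IsNoetherianRing ↥(T.presheaf.stalk (f.base x)) :=
    IsLocalization.isNoetherianRing (hU.primeIdealOf ⟨f.base x, htU⟩).asIdeal.primeCompl
      (T.presheaf.stalk (f.base x)) ‹_›
  haveI : Module.Flat ↥Γ(T, U) ↥(T.presheaf.stalk (f.base x)) :=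
    IsLocalization.flat _ (hU.primeIdealOf ⟨f.base x, htU⟩).asIdeal.primeCompl
  haveI : Module.Flat ↥(T.presheaf.stalk (f.base x)) ↥(X.presheaf.stalk x) :=
    hflat x
  haveI : Module.Flat ↥Γ(T, U) ↥(X.presheaf.stalk x) :=
    Module.Flat.trans ↥Γ(T, U) ↥(T.presheaf.stalk (f.base x)) ↥(X.presheaf.stalk x)
  -- residue fields at generizations
  have hsp : ∀ p : PrimeSpectrum ↥(T.presheaf.stalk (f.base x)),
      (T.fromSpecStalk (f.base x)).base p ⤳ f.base x := fun p => fromSpecStalk_base_specializes p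
  have ht'U : ∀ p : PrimeSpectrum ↥(T.presheaf.stalk (f.base x)),
      (T.fromSpecStalk (f.base x)).base p ∈ U := fun p => (hsp p).mem_open U.2 htU
  letI : ∀ p : PrimeSpectrum ↥(T.presheaf.stalk (f.base x)),
      Algebra ↥Γ(T, U) ↥(T.residueField ((T.fromSpecStalk (f.base x)).base p)) := fun p =>
    (T.presheaf.germ U _ (ht'U p) ≫ T.residue ((T.fromSpecStalk (f.base x)).base p)).hom.toAlgebra
  refine isReduced_of_flat_of_fields'
    (A := ↥Γ(T, U)) (R := ↥(T.presheaf.stalk (f.base x))) (S := ↥(X.presheaf.stalk x))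
    (AlgHom.mk (f.stalkMap x).hom (fun a => rfl))
    (fun p => ↥(T.residueField ((T.fromSpecStalk (f.base x)).base p)))
    (fun p => AlgHom.mk
      (T.presheaf.stalkSpecializes (hsp p) ≫ T.residue ((T.fromSpecStalk (f.base x)).base p)).hom
      (fun a => ?_))
    (fun p => le_of_eq (ker_stalkSpecializes_residue p))
    (fun p => ?_)
  · -- commutes
    show (T.residue _).hom ((T.presheaf.stalkSpecializes (hsp p)).hom
        ((T.presheaf.germ U (f.base x) htU).hom a)) = (T.residue _).hom ((T.presheaf.germ U _ (ht'U p)).hom a)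
    congr 1
    exact congrArg (fun g => g.hom a) (T.presheaf.germ_stalkSpecializes htU (hsp p))
  · -- reducedness of the tensor product
    haveI := hfib ((T.fromSpecStalk (f.base x)).base p)
    haveI hBK : IsReduced (↥Γ(X, V) ⊗[↥Γ(T, U)]
        ↥(T.residueField ((T.fromSpecStalk (f.base x)).base p))) :=
      isReduced_tensor_of_fiber_reduced' f hU hV hVU (ht'U p)
    exact isReduced_tensor_of_isLocalization' ↥Γ(T, U) ↥Γ(X, V) ↥(X.presheaf.stalk x)
      ↥(T.residueField ((T.fromSpecStalk (f.base x)).base p))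
      (hV.primeIdealOf ⟨x, hxV⟩).asIdeal.primeCompl
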